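/- Let f_1 and f_2 be polymatroid rank functions on the same finite ground set E, and let α > 0. Then the Minkowski sums satisfy P(f_1) + P(f_2) = P(f_1 + f_2) and B(f_1) + B(f_2) = B(f_1 + f_2); moreover P(α f) = α · P(f) and B(α f) = α · B(f) for any polymatroid rank function f on E. -/

import Mathlib

open Pointwise

/-- The independence polytope of a set function on a finite ground set. -/
def indepP {E : Type*} [Fintype E] (f : Finset E → ℝ) : Set (E → ℝ) :=
  {x | (∀ i, 0 ≤ x i) ∧ ∀ S : Finset E, ∑ i ∈ S, x i ≤ f S}

/-- The base polytope of a set function on a finite ground set. -/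
def baseB {E : Type*} [Fintype E] (f : Finset E → ℝ) : Set (E → ℝ) :=
  {x ∈ indepP f | ∑ i, x i = f Finset.univ}

namespace PolySum

variable {E : Type*} [Fintype E] [DecidableEq E]

/-- The prefix sets of an enumeration. -/
def chainA {n : ℕ} (e : Fin n ≃ E) (k : ℕ) : Finset E :=
  (Finset.univ.filter (fun j : Fin n => (j : ℕ) < k)).image e

lemma mem_chainA {n : ℕ} (e : Fin n ≃ E) (k : ℕ) (i : E) :
    i ∈ chainA e k ↔ ((e.symm i : ℕ) < k) := by
  simp only [chainA, Finset.mem_image, Finset.mem_filter, Finset.mem_univ, true_and]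
  constructor
  · rintro ⟨j, hj, rfl⟩; simpa using hj
  · intro h; exact ⟨e.symm i, h, e.apply_symm_apply i⟩

lemma chainA_zero {n : ℕ} (e : Fin n ≃ E) : chainA e 0 = ∅ := by
  ext i; simp [mem_chainA]

lemma chainA_stab {n : ℕ} (e : Fin n ≃ E) {k : ℕ} (hk : n ≤ k) :
    chainA e k = Finset.univ := by
  ext i; simp only [mem_chainA, Finset.mem_univ, iff_true]
  exact lt_of_lt_of_le (e.symm i).isLt hk

lemma chainA_succ {n : ℕ} (e : Fin n ≃ E) {k : ℕ} (hk : k < n) :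
    chainA e (k + 1) = insert (e ⟨k, hk⟩) (chainA e k) := by
  ext i
  rw [Finset.mem_insert, mem_chainA, mem_chainA]
  constructor
  · intro h
    rcases Nat.lt_succ_iff_lt_or_eq.mp h with h | h
    · exact Or.inr h
    · left
      have : e.symm i = ⟨k, hk⟩ := Fin.ext h
      rw [← this, e.apply_symm_apply]
  · rintro (rfl | h)
    · simp
    · omega

lemma not_mem_chainA_self {n : ℕ} (e : Fin n ≃ E) {k : ℕ} (hk : k < n) :
    e ⟨k, hk⟩ ∉ chainA e k := by
  rw [mem_chainA]; simp

lemma chainA_subset_succ {n : ℕ} (e : Fin n ≃ E) (k : ℕ) :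
    chainA e k ⊆ chainA e (k + 1) := by
  intro i hi; rw [mem_chainA] at hi ⊢; omega

/-- The greedy vector associated to an enumeration. -/
def gvec {n : ℕ} (e : Fin n ≃ E) (f : Finset E → ℝ) : E → ℝ :=
  fun i => f (chainA e ((e.symm i : ℕ) + 1)) - f (chainA e (e.symm i))

lemma gvec_apply {n : ℕ} (e : Fin n ≃ E) (f : Finset E → ℝ) (j : Fin n) :
    gvec e f (e j) = f (chainA e ((j : ℕ) + 1)) - f (chainA e (j : ℕ)) := by
  simp [gvec]

lemma gvec_nonneg {n : ℕ} (e : Fin n ≃ E) (f : Finset E → ℝ)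
    (hmono : ∀ A B : Finset E, A ⊆ B → f A ≤ f B) (i : E) : 0 ≤ gvec e f i :=
  sub_nonneg.mpr (hmono _ _ (chainA_subset_succ e _))

lemma sum_gvec_le {n : ℕ} (e : Fin n ≃ E) (f : Finset E → ℝ)
    (hf0 : f ∅ = 0)
    (hsub : ∀ A B : Finset E, f (A ∪ B) + f (A ∩ B) ≤ f A + f B)
    (S : Finset E) : ∑ i ∈ S, gvec e f i ≤ f S := by
  have key : ∀ k : ℕ, ∑ i ∈ S ∩ chainA e k, gvec e f i ≤ f (S ∩ chainA e k) := by
    intro k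
    induction k with
    | zero => simp [chainA_zero, hf0]
    | succ k ih =>
      by_cases hk : k < n
      · set a := e ⟨k, hk⟩ with ha
        have haA : a ∉ chainA e k := not_mem_chainA_self e hk
        rw [chainA_succ e hk]
        by_cases haS : a ∈ S
        · have h1 : S ∩ insert a (chainA e k) = insert a (S ∩ chainA e k) := by
            ext i
            simp only [Finset.mem_inter, Finset.mem_insert]
            constructor
            · rintro ⟨hiS, (rfl | hiA)⟩
              · exact Or.inl rfl
              · exact Or.inr ⟨hiS, hiA⟩
            · rintro (rfl | ⟨hiS, hiA⟩)
              · exact ⟨haS, Or.inl rfl⟩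
              · exact ⟨hiS, Or.inr hiA⟩
          have haSA : a ∉ S ∩ chainA e k := by
            simp only [Finset.mem_inter]; tauto
          rw [h1, Finset.sum_insert haSA]
          have hga : gvec e f a = f (insert a (chainA e k)) - f (chainA e k) := by
            rw [ha, gvec_apply e f ⟨k, hk⟩, ← chainA_succ e hk]
          have hsubm := hsub (chainA e k) (insert a (S ∩ chainA e k))
          have hU : chainA e k ∪ insert a (S ∩ chainA e k) = insert a (chainA e k) := by
            ext i
            simp only [Finset.mem_union, Finset.mem_insert, Finset.mem_inter]
            tauto
          have hI : chainA e k ∩ insert a (S ∩ chainA e k) = S ∩ chainA e k := by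
            ext i
            simp only [Finset.mem_inter, Finset.mem_insert]
            constructor
            · rintro ⟨hik, (rfl | ⟨hiS, _⟩)⟩
              · exact absurd hik haA
              · exact ⟨hiS, hik⟩
            · rintro ⟨hiS, hik⟩; exact ⟨hik, Or.inr ⟨hiS, hik⟩⟩
          rw [hU, hI] at hsubm
          linarith
        · have h1 : S ∩ insert a (chainA e k) = S ∩ chainA e k := by
            ext i
            simp only [Finset.mem_inter, Finset.mem_insert]
            constructor
            · rintro ⟨hiS, (rfl | hiA)⟩
              · exact absurd hiS haS
              · exact ⟨hiS, hiA⟩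
            · rintro ⟨hiS, hiA⟩; exact ⟨hiS, Or.inr hiA⟩
          rw [h1]; exact ih
      · have h1 : chainA e (k + 1) = chainA e k := by
          rw [chainA_stab e (by omega), chainA_stab e (by omega)]
        rw [h1]; exact ih
  have := key n
  rwa [chainA_stab e le_rfl, Finset.inter_univ] at this

lemma sum_gvec_univ {n : ℕ} (e : Fin n ≃ E) (f : Finset E → ℝ) (hf0 : f ∅ = 0) :
    ∑ i, gvec e f i = f Finset.univ := by
  rw [← Equiv.sum_comp e (gvec e f)]
  simp only [gvec_apply]
  rw [Fin.sum_univ_eq_sum_range (fun k => f (chainA e (k + 1)) - f (chainA e k)) n,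
    Finset.sum_range_sub (fun k => f (chainA e k)), chainA_stab e le_rfl, chainA_zero, hf0,
    sub_zero]

/-- Greedy vector is in the base polytope. -/
lemma gvec_mem_baseB {n : ℕ} (e : Fin n ≃ E) (f : Finset E → ℝ)
    (hf0 : f ∅ = 0) (hmono : ∀ A B : Finset E, A ⊆ B → f A ≤ f B)
    (hsub : ∀ A B : Finset E, f (A ∪ B) + f (A ∩ B) ≤ f A + f B) :
    gvec e f ∈ baseB f :=
  ⟨⟨gvec_nonneg e f hmono, sum_gvec_le e f hf0 hsub⟩, sum_gvec_univ e f hf0⟩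

/-- The set of indices below `k`. -/
def Fk (n k : ℕ) : Finset (Fin n) := Finset.univ.filter (fun j => (j : ℕ) < k)

lemma sum_chainA {n : ℕ} (e : Fin n ≃ E) (x : E → ℝ) (k : ℕ) :
    ∑ i ∈ chainA e k, x i = ∑ j ∈ Fk n k, x (e j) :=
  Finset.sum_image (fun _ _ _ _ h => e.injective h)

/-- The key Abel summation inequality. -/
lemma key_ub {n : ℕ} (e : Fin n ≃ E) (f : Finset E → ℝ) (hf0 : f ∅ = 0)
    (v : Fin n → ℝ) (hv : ∀ j j' : Fin n, j ≤ j' → v j' ≤ v j)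
    (x : E → ℝ) (hx : ∀ S : Finset E, ∑ i ∈ S, x i ≤ f S) :
    ∀ k, k ≤ n → ∀ m : ℝ, (∀ j : Fin n, (j : ℕ) < k → m ≤ v j) →
      ∑ j ∈ Fk n k, v j * x (e j) ≤
        (∑ j ∈ Fk n k, v j * (f (chainA e ((j : ℕ) + 1)) - f (chainA e (j : ℕ))))
          - m * (f (chainA e k) - ∑ i ∈ chainA e k, x i) := by
  intro k
  induction k with
  | zero => intro _ m _; simp [Fk, chainA_zero, hf0]
  | succ k ih =>
    intro hk m hm
    have hkn : k < n := hk
    set jk : Fin n := ⟨k, hkn⟩ with hjkdef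
    have hFk : Fk n (k + 1) = insert jk (Fk n k) := by
      ext j
      simp only [Fk, Finset.mem_filter, Finset.mem_univ, true_and, Finset.mem_insert,
        Fin.ext_iff, hjkdef]
      omega
    have hjk : jk ∉ Fk n k := by simp [Fk, hjkdef]
    have ihm := ih (le_of_lt hkn) (v jk)
      (fun j hj => hv j jk (by rw [Fin.le_def]; exact le_of_lt hj))
    rw [hFk, Finset.sum_insert hjk, Finset.sum_insert hjk]
    have hstep : ∑ i ∈ chainA e (k + 1), x i = x (e jk) + ∑ i ∈ chainA e k, x i := by
      rw [chainA_succ e hkn, Finset.sum_insert (not_mem_chainA_self e hkn)]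
    have hfx : ∑ i ∈ chainA e (k + 1), x i ≤ f (chainA e (k + 1)) := hx _
    rw [hstep] at hfx
    have hmv : m ≤ v jk := hm jk (by simp [hjkdef])
    have hprod : 0 ≤ (v jk - m) * (f (chainA e (k + 1)) - (x (e jk) + ∑ i ∈ chainA e k, x i)) :=
      mul_nonneg (sub_nonneg.mpr hmv) (sub_nonneg.mpr hfx)
    rw [hstep]
    nlinarith [ihm, hprod]

lemma Fk_univ (n : ℕ) : Fk n n = Finset.univ := by
  ext j; simp [Fk, j.isLt]

/-- Upper bound for points of the independence polytope. -/
lemma indep_le_Vp {n : ℕ} (e : Fin n ≃ E) (w : E → ℝ)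
    (hsort : ∀ j j' : Fin n, j ≤ j' → w (e j') ≤ w (e j))
    (f : Finset E → ℝ) (hf0 : f ∅ = 0)
    (x : E → ℝ) (hx : x ∈ indepP f) :
    ∑ i, w i * x i ≤
      ∑ j : Fin n, max (w (e j)) 0 * (f (chainA e ((j : ℕ) + 1)) - f (chainA e (j : ℕ))) := by
  have h1 : ∑ i, w i * x i ≤ ∑ i, max (w i) 0 * x i :=
    Finset.sum_le_sum fun i _ => mul_le_mul_of_nonneg_right (le_max_left _ _) (hx.1 i)
  have h2 : ∑ i, max (w i) 0 * x i = ∑ j : Fin n, max (w (e j)) 0 * x (e j) :=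
    (Equiv.sum_comp e (fun i => max (w i) 0 * x i)).symm
  have h3 := key_ub e f hf0 (fun j => max (w (e j)) 0)
    (fun j j' h => max_le_max (hsort j j' h) le_rfl) x hx.2 n le_rfl 0
    (fun j _ => le_max_right _ 0)
  rw [Fk_univ] at h3
  simp only [zero_mul, sub_zero] at h3
  linarith

/-- Upper bound for points of the base polytope. -/
lemma base_le_Vb {n : ℕ} (e : Fin n ≃ E) (w : E → ℝ)
    (hsort : ∀ j j' : Fin n, j ≤ j' → w (e j') ≤ w (e j))
    (f : Finset E → ℝ) (hf0 : f ∅ = 0)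
    (x : E → ℝ) (hx : x ∈ baseB f) :
    ∑ i, w i * x i ≤
      ∑ j : Fin n, w (e j) * (f (chainA e ((j : ℕ) + 1)) - f (chainA e (j : ℕ))) := by
  have h2 : ∑ i, w i * x i = ∑ j : Fin n, w (e j) * x (e j) :=
    (Equiv.sum_comp e (fun i => w i * x i)).symm
  rcases Nat.eq_zero_or_pos n with h0 | h0
  · subst h0
    have : IsEmpty E := Equiv.isEmpty e.symm
    simp [Finset.univ_eq_empty]
  · have hn1 : n - 1 < n := by omega
    set m : ℝ := w (e ⟨n - 1, hn1⟩) with hm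
    have h3 := key_ub e f hf0 (fun j => w (e j)) hsort x hx.1.2 n le_rfl m
      (fun j _ => hsort j ⟨n - 1, hn1⟩ (by rw [Fin.le_def]; simp; omega))
    rw [Fk_univ, chainA_stab e le_rfl] at h3
    rw [hx.2, sub_self, mul_zero, sub_zero] at h3
    linarith

/-- Existence of a sorted enumeration. -/
lemma exists_sorted_equiv (w : E → ℝ) :
    ∃ e : Fin (Fintype.card E) ≃ E,
      ∀ j j' : Fin (Fintype.card E), j ≤ j' → w (e j') ≤ w (e j) := by
  set e₀ := (Fintype.equivFin E).symm with he₀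
  set g : Fin (Fintype.card E) → ℝ := fun j => -(w (e₀ j)) with hg
  have hmx : Monotone (g ∘ Tuple.sort g) := Tuple.monotone_sort g
  refine ⟨(Tuple.sort g : Equiv.Perm (Fin (Fintype.card E))).trans e₀, fun j j' h => ?_⟩
  have := hmx h
  simp only [Function.comp_apply, hg] at this
  simp only [Equiv.trans_apply]
  linarith

lemma isClosed_indepP (f : Finset E → ℝ) : IsClosed (indepP f) := by
  have h : indepP f =
      (⋂ i : E, {x : E → ℝ | 0 ≤ x i}) ∩ ⋂ S : Finset E, {x : E → ℝ | ∑ i ∈ S, x i ≤ f S} := by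
    ext x; simp [indepP, Set.mem_iInter]
  rw [h]
  exact (isClosed_iInter fun i => isClosed_le continuous_const (continuous_apply i)).inter
    (isClosed_iInter fun S =>
      isClosed_le (continuous_finset_sum S fun i _ => continuous_apply i) continuous_const)

lemma isCompact_indepP (f : Finset E → ℝ) : IsCompact (indepP f) := by
  refine IsCompact.of_isClosed_subset
    (isCompact_univ_pi (fun i : E => isCompact_Icc (a := (0 : ℝ)) (b := f {i})))
    (isClosed_indepP f) ?_
  intro x hx
  rw [Set.mem_univ_pi]
  intro i
  refine ⟨hx.1 i, ?_⟩
  have := hx.2 {i}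
  simpa using this

lemma isClosed_baseB (f : Finset E → ℝ) : IsClosed (baseB f) := by
  have h : baseB f = indepP f ∩ {x : E → ℝ | ∑ i, x i = f Finset.univ} := rfl
  rw [h]
  exact (isClosed_indepP f).inter
    (isClosed_eq (continuous_finset_sum _ fun i _ => continuous_apply i) continuous_const)

lemma isCompact_baseB (f : Finset E → ℝ) : IsCompact (baseB f) :=
  IsCompact.of_isClosed_subset (isCompact_indepP f) (isClosed_baseB f)
    (fun x hx => hx.1)

lemma convex_indepP (f : Finset E → ℝ) : Convex ℝ (indepP f) := by
  intro x hx y hy a b ha hb hab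
  constructor
  · intro i
    have : (a • x + b • y) i = a * x i + b * y i := by simp
    rw [this]
    have := mul_nonneg ha (hx.1 i)
    have := mul_nonneg hb (hy.1 i)
    linarith
  · intro S
    have hsum : ∑ i ∈ S, (a • x + b • y) i = a * ∑ i ∈ S, x i + b * ∑ i ∈ S, y i := by
      simp only [Pi.add_apply, Pi.smul_apply, smul_eq_mul]
      rw [Finset.sum_add_distrib, Finset.mul_sum, Finset.mul_sum]
    rw [hsum]
    have h1 := mul_le_mul_of_nonneg_left (hx.2 S) ha
    have h2 := mul_le_mul_of_nonneg_left (hy.2 S) hb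
    have h3 : a * f S + b * f S = f S := by rw [← add_mul, hab, one_mul]
    linarith

lemma convex_baseB (f : Finset E → ℝ) : Convex ℝ (baseB f) := by
  intro x hx y hy a b ha hb hab
  refine ⟨convex_indepP f hx.1 hy.1 ha hb hab, ?_⟩
  have hsum : ∑ i, (a • x + b • y) i = a * ∑ i, x i + b * ∑ i, y i := by
    simp only [Pi.add_apply, Pi.smul_apply, smul_eq_mul]
    rw [Finset.sum_add_distrib, Finset.mul_sum, Finset.mul_sum]
  rw [hsum, hx.2, hy.2, ← add_mul, hab, one_mul]

lemma clm_eq_sum (L : (E → ℝ) →L[ℝ] ℝ) (z : E → ℝ) :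
    L z = ∑ i, z i * L (fun j => if i = j then 1 else 0) := by
  conv_lhs => rw [pi_eq_sum_univ z]
  rw [map_sum]
  refine Finset.sum_congr rfl fun i _ => ?_
  rw [ContinuousLinearMap.map_smul, smul_eq_mul]

/-- The value of the positive-part greedy vector. -/
lemma gvecP_value {n : ℕ} (e : Fin n ≃ E) (w : E → ℝ) (f : Finset E → ℝ) :
    ∑ i, w i * (if 0 < w i then gvec e f i else 0) =
      ∑ j : Fin n, max (w (e j)) 0 * (f (chainA e ((j : ℕ) + 1)) - f (chainA e (j : ℕ))) := by
  rw [← Equiv.sum_comp e (fun i => w i * (if 0 < w i then gvec e f i else 0))]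
  refine Finset.sum_congr rfl fun j _ => ?_
  by_cases h : 0 < w (e j)
  · rw [if_pos h, max_eq_left h.le, gvec_apply]
  · rw [if_neg h, max_eq_right (le_of_not_gt h), mul_zero, zero_mul]

lemma gvec_value {n : ℕ} (e : Fin n ≃ E) (w : E → ℝ) (f : Finset E → ℝ) :
    ∑ i, w i * gvec e f i =
      ∑ j : Fin n, w (e j) * (f (chainA e ((j : ℕ) + 1)) - f (chainA e (j : ℕ))) := by
  rw [← Equiv.sum_comp e (fun i => w i * gvec e f i)]
  refine Finset.sum_congr rfl fun j _ => ?_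
  rw [gvec_apply]

lemma gvecP_mem_indepP {n : ℕ} (e : Fin n ≃ E) (w : E → ℝ) (f : Finset E → ℝ)
    (hf0 : f ∅ = 0) (hmono : ∀ A B : Finset E, A ⊆ B → f A ≤ f B)
    (hsub : ∀ A B : Finset E, f (A ∪ B) + f (A ∩ B) ≤ f A + f B) :
    (fun i => if 0 < w i then gvec e f i else 0) ∈ indepP f := by
  constructor
  · intro i
    dsimp only
    split_ifs with h
    · exact gvec_nonneg e f hmono i
    · exact le_rfl
  · intro S
    calc ∑ i ∈ S, (if 0 < w i then gvec e f i else 0) ≤ ∑ i ∈ S, gvec e f i := by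
          refine Finset.sum_le_sum fun i _ => ?_
          by_cases h : 0 < w i
          · rw [if_pos h]
          · rw [if_neg h]; exact gvec_nonneg e f hmono i
      _ ≤ f S := sum_gvec_le e f hf0 hsub S

/-- Minkowski sum of independence polytopes. -/
lemma indep_sum (f₁ f₂ : Finset E → ℝ)
    (hf₁0 : f₁ ∅ = 0) (hf₁mono : ∀ A B : Finset E, A ⊆ B → f₁ A ≤ f₁ B)
    (hf₁sub : ∀ A B : Finset E, f₁ (A ∪ B) + f₁ (A ∩ B) ≤ f₁ A + f₁ B)
    (hf₂0 : f₂ ∅ = 0) (hf₂mono : ∀ A B : Finset E, A ⊆ B → f₂ A ≤ f₂ B)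
    (hf₂sub : ∀ A B : Finset E, f₂ (A ∪ B) + f₂ (A ∩ B) ≤ f₂ A + f₂ B) :
    indepP f₁ + indepP f₂ = indepP (fun S => f₁ S + f₂ S) := by
  apply Set.Subset.antisymm
  · rintro x ⟨a, ha, b, hb, rfl⟩
    constructor
    · intro i; exact add_nonneg (ha.1 i) (hb.1 i)
    · intro S
      have : ∑ i ∈ S, (a + b) i = ∑ i ∈ S, a i + ∑ i ∈ S, b i := by
        simp [Finset.sum_add_distrib]
      rw [this]
      exact add_le_add (ha.2 S) (hb.2 S)
  · intro x hx
    by_contra hnot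
    have hcomp : IsCompact (indepP f₁ + indepP f₂) :=
      (isCompact_indepP f₁).add (isCompact_indepP f₂)
    have hconv : Convex ℝ (indepP f₁ + indepP f₂) :=
      (convex_indepP f₁).add (convex_indepP f₂)
    obtain ⟨L, u, hsep, hux⟩ := geometric_hahn_banach_closed_point hconv hcomp.isClosed hnot
    set w : E → ℝ := fun i => L (fun j => if i = j then 1 else 0) with hw
    obtain ⟨e, hsort⟩ := exists_sorted_equiv w
    set g₁ : E → ℝ := fun i => if 0 < w i then gvec e f₁ i else 0 with hg₁
    set g₂ : E → ℝ := fun i => if 0 < w i then gvec e f₂ i else 0 with hg₂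
    have hg₁mem : g₁ ∈ indepP f₁ := gvecP_mem_indepP e w f₁ hf₁0 hf₁mono hf₁sub
    have hg₂mem : g₂ ∈ indepP f₂ := gvecP_mem_indepP e w f₂ hf₂0 hf₂mono hf₂sub
    have hmem : g₁ + g₂ ∈ indepP f₁ + indepP f₂ := Set.add_mem_add hg₁mem hg₂mem
    have hlt : L (g₁ + g₂) < u := hsep _ hmem
    have hub := indep_le_Vp e w hsort (fun S => f₁ S + f₂ S)
      (by simp [hf₁0, hf₂0]) x hx
    have hVsplit :
        ∑ j : Fin (Fintype.card E), max (w (e j)) 0 *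
            ((fun S => f₁ S + f₂ S) (chainA e ((j : ℕ) + 1)) -
              (fun S => f₁ S + f₂ S) (chainA e (j : ℕ))) =
          (∑ j : Fin (Fintype.card E), max (w (e j)) 0 *
              (f₁ (chainA e ((j : ℕ) + 1)) - f₁ (chainA e (j : ℕ)))) +
            ∑ j : Fin (Fintype.card E), max (w (e j)) 0 *
              (f₂ (chainA e ((j : ℕ) + 1)) - f₂ (chainA e (j : ℕ))) := by
      rw [← Finset.sum_add_distrib]
      refine Finset.sum_congr rfl fun j _ => ?_
      ring
    have hv₁ := gvecP_value e w f₁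
    have hv₂ := gvecP_value e w f₂
    have hLx : L x = ∑ i, x i * w i := clm_eq_sum L x
    have hLg : L (g₁ + g₂) = ∑ i, (g₁ + g₂) i * w i := clm_eq_sum L (g₁ + g₂)
    have hsum : ∑ i, (g₁ + g₂) i * w i = (∑ i, w i * g₁ i) + ∑ i, w i * g₂ i := by
      rw [← Finset.sum_add_distrib]
      refine Finset.sum_congr rfl fun i _ => ?_
      simp [mul_comm]; ring
    have hxw : ∑ i, x i * w i = ∑ i, w i * x i := by
      refine Finset.sum_congr rfl fun i _ => ?_; ring
    have : L x ≤ L (g₁ + g₂) := by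
      rw [hLx, hLg, hsum, hxw]
      rw [hg₁, hg₂, hv₁, hv₂]
      calc ∑ i, w i * x i ≤ _ := hub
        _ = _ := hVsplit
    linarith

/-- Minkowski sum of base polytopes. -/
lemma base_sum (f₁ f₂ : Finset E → ℝ)
    (hf₁0 : f₁ ∅ = 0) (hf₁mono : ∀ A B : Finset E, A ⊆ B → f₁ A ≤ f₁ B)
    (hf₁sub : ∀ A B : Finset E, f₁ (A ∪ B) + f₁ (A ∩ B) ≤ f₁ A + f₁ B)
    (hf₂0 : f₂ ∅ = 0) (hf₂mono : ∀ A B : Finset E, A ⊆ B → f₂ A ≤ f₂ B)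
    (hf₂sub : ∀ A B : Finset E, f₂ (A ∪ B) + f₂ (A ∩ B) ≤ f₂ A + f₂ B) :
    baseB f₁ + baseB f₂ = baseB (fun S => f₁ S + f₂ S) := by
  apply Set.Subset.antisymm
  · rintro x ⟨a, ha, b, hb, rfl⟩
    refine ⟨⟨fun i => add_nonneg (ha.1.1 i) (hb.1.1 i), fun S => ?_⟩, ?_⟩
    · have : ∑ i ∈ S, (a + b) i = ∑ i ∈ S, a i + ∑ i ∈ S, b i := by
        simp [Finset.sum_add_distrib]
      rw [this]
      exact add_le_add (ha.1.2 S) (hb.1.2 S)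
    · have : ∑ i, (a + b) i = ∑ i, a i + ∑ i, b i := by
        simp [Finset.sum_add_distrib]
      rw [this, ha.2, hb.2]
  · intro x hx
    by_contra hnot
    have hcomp : IsCompact (baseB f₁ + baseB f₂) :=
      (isCompact_baseB f₁).add (isCompact_baseB f₂)
    have hconv : Convex ℝ (baseB f₁ + baseB f₂) :=
      (convex_baseB f₁).add (convex_baseB f₂)
    obtain ⟨L, u, hsep, hux⟩ := geometric_hahn_banach_closed_point hconv hcomp.isClosed hnot
    set w : E → ℝ := fun i => L (fun j => if i = j then 1 else 0) with hw
    obtain ⟨e, hsort⟩ := exists_sorted_equiv w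
    have hg₁mem : gvec e f₁ ∈ baseB f₁ := gvec_mem_baseB e f₁ hf₁0 hf₁mono hf₁sub
    have hg₂mem : gvec e f₂ ∈ baseB f₂ := gvec_mem_baseB e f₂ hf₂0 hf₂mono hf₂sub
    have hmem : gvec e f₁ + gvec e f₂ ∈ baseB f₁ + baseB f₂ := Set.add_mem_add hg₁mem hg₂mem
    have hlt : L (gvec e f₁ + gvec e f₂) < u := hsep _ hmem
    have hub := base_le_Vb e w hsort (fun S => f₁ S + f₂ S)
      (by simp [hf₁0, hf₂0]) x hx
    have hVsplit :
        ∑ j : Fin (Fintype.card E), w (e j) *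
            ((fun S => f₁ S + f₂ S) (chainA e ((j : ℕ) + 1)) -
              (fun S => f₁ S + f₂ S) (chainA e (j : ℕ))) =
          (∑ j : Fin (Fintype.card E), w (e j) *
              (f₁ (chainA e ((j : ℕ) + 1)) - f₁ (chainA e (j : ℕ)))) +
            ∑ j : Fin (Fintype.card E), w (e j) *
              (f₂ (chainA e ((j : ℕ) + 1)) - f₂ (chainA e (j : ℕ))) := by
      rw [← Finset.sum_add_distrib]
      refine Finset.sum_congr rfl fun j _ => ?_
      ring
    have hv₁ := gvec_value e w f₁
    have hv₂ := gvec_value e w f₂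
    have hLx : L x = ∑ i, x i * w i := clm_eq_sum L x
    have hLg : L (gvec e f₁ + gvec e f₂) = ∑ i, (gvec e f₁ + gvec e f₂) i * w i :=
      clm_eq_sum L _
    have hsum : ∑ i, (gvec e f₁ + gvec e f₂) i * w i =
        (∑ i, w i * gvec e f₁ i) + ∑ i, w i * gvec e f₂ i := by
      rw [← Finset.sum_add_distrib]
      refine Finset.sum_congr rfl fun i _ => ?_
      simp only [Pi.add_apply]; ring
    have hxw : ∑ i, x i * w i = ∑ i, w i * x i := by
      refine Finset.sum_congr rfl fun i _ => ?_; ring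
    have : L x ≤ L (gvec e f₁ + gvec e f₂) := by
      rw [hLx, hLg, hsum, hxw, hv₁, hv₂]
      calc ∑ i, w i * x i ≤ _ := hub
        _ = _ := hVsplit
    linarith

lemma indep_smul (f : Finset E → ℝ) (α : ℝ) (hα : 0 < α) :
    indepP (fun S => α * f S) = α • indepP f := by
  ext x
  rw [Set.mem_smul_set_iff_inv_smul_mem₀ (ne_of_gt hα)]
  constructor
  · rintro ⟨h1, h2⟩
    constructor
    · intro i
      have : (α⁻¹ • x) i = α⁻¹ * x i := rfl
      rw [this]
      exact mul_nonneg (inv_nonneg.mpr hα.le) (h1 i)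
    · intro S
      have hsum : ∑ i ∈ S, (α⁻¹ • x) i = α⁻¹ * ∑ i ∈ S, x i := by
        simp [Finset.mul_sum]
      rw [hsum]
      rw [inv_mul_le_iff₀ hα]
      exact h2 S
  · rintro ⟨h1, h2⟩
    constructor
    · intro i
      have h := h1 i
      have heq : (α⁻¹ • x) i = α⁻¹ * x i := rfl
      rw [heq] at h
      have : x i = α * (α⁻¹ * x i) := by field_simp
      rw [this]
      exact mul_nonneg hα.le h
    · intro S
      have h := h2 S
      have hsum : ∑ i ∈ S, (α⁻¹ • x) i = α⁻¹ * ∑ i ∈ S, x i := by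
        simp [Finset.mul_sum]
      rw [hsum, inv_mul_le_iff₀ hα] at h
      exact h

lemma base_smul (f : Finset E → ℝ) (α : ℝ) (hα : 0 < α) :
    baseB (fun S => α * f S) = α • baseB f := by
  have hind := indep_smul f α hα
  ext x
  rw [Set.mem_smul_set_iff_inv_smul_mem₀ (ne_of_gt hα)]
  constructor
  · rintro ⟨h1, h2⟩
    have hx : x ∈ indepP (fun S => α * f S) := h1
    rw [hind, Set.mem_smul_set_iff_inv_smul_mem₀ (ne_of_gt hα)] at hx
    refine ⟨hx, ?_⟩
    have hsum : ∑ i, (α⁻¹ • x) i = α⁻¹ * ∑ i, x i := by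
      simp [Finset.mul_sum]
    rw [hsum, h2]
    field_simp
  · rintro ⟨h1, h2⟩
    have hx : α⁻¹ • x ∈ indepP f := h1
    rw [← Set.mem_smul_set_iff_inv_smul_mem₀ (ne_of_gt hα), ← hind] at hx
    refine ⟨hx, ?_⟩
    have hsum : ∑ i, (α⁻¹ • x) i = α⁻¹ * ∑ i, x i := by
      simp [Finset.mul_sum]
    rw [hsum] at h2
    have : ∑ i, x i = α * (α⁻¹ * ∑ i, x i) := by
      field_simp
    rw [this, h2]

end PolySum

/-- Minkowski sums and positive scalings of independence and base
polytopes of polymatroid rank functions. -/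
theorem stmt_3 {E : Type*} [Fintype E] [DecidableEq E]
    (f₁ f₂ f : Finset E → ℝ)
    (hf₁0 : f₁ ∅ = 0) (hf₁mono : ∀ A B : Finset E, A ⊆ B → f₁ A ≤ f₁ B)
    (hf₁sub : ∀ A B : Finset E, f₁ (A ∪ B) + f₁ (A ∩ B) ≤ f₁ A + f₁ B)
    (hf₂0 : f₂ ∅ = 0) (hf₂mono : ∀ A B : Finset E, A ⊆ B → f₂ A ≤ f₂ B)
    (hf₂sub : ∀ A B : Finset E, f₂ (A ∪ B) + f₂ (A ∩ B) ≤ f₂ A + f₂ B)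
    (hf0 : f ∅ = 0) (hfmono : ∀ A B : Finset E, A ⊆ B → f A ≤ f B)
    (hfsub : ∀ A B : Finset E, f (A ∪ B) + f (A ∩ B) ≤ f A + f B)
    (α : ℝ) (hα : 0 < α) :
    indepP f₁ + indepP f₂ = indepP (fun S => f₁ S + f₂ S) ∧
    baseB f₁ + baseB f₂ = baseB (fun S => f₁ S + f₂ S) ∧
    indepP (fun S => α * f S) = α • indepP f ∧
    baseB (fun S => α * f S) = α • baseB f := by
  exact ⟨PolySum.indep_sum f₁ f₂ hf₁0 hf₁mono hf₁sub hf₂0 hf₂mono hf₂sub,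
    PolySum.base_sum f₁ f₂ hf₁0 hf₁mono hf₁sub hf₂0 hf₂mono hf₂sub,
    PolySum.indep_smul f α hα, PolySum.base_smul f α hα⟩
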